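/- The class of submodular valuations is not closed under OR: there exist submodular valuations u, w on a three-element set such that u∨w, defined by (u∨w)(S) = max over T ⊆ S of u(T)+w(S∖T), is not submodular. Concretely, take u the budget-limited additive valuation with weights u(1)=3, u(2)=5, u(3)=3 and budget 6, and w the additive valuation w(1)=1, w(2)=2, w(3)=0; then (u∨w)({1,2}) + (u∨w)({2,3}) < (u∨w)({1,2,3}) + (u∨w)({2}). -/

import Mathlib

/-- The OR combination of two valuations. -/
noncomputable def orVal {X : Type*} [DecidableEq X]
    (u w : Finset X → ℝ) (S : Finset X) : ℝ :=
  S.powerset.sup' (Finset.powerset_nonempty S) (fun T => u T + w (S \ T))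

/-- submodular valuations are not closed under OR. With
`u(S) = min(6, Σ_{i∈S} uᵢ)` for weights `(3,5,3)` and `w` additive with
weights `(1,2,0)`, the OR `u∨w` violates submodularity:
`(u∨w)({1,2}) + (u∨w)({2,3}) < (u∨w)({1,2,3}) + (u∨w)({2})`. -/
theorem submodular_not_closed_under_or :
    let u : Finset (Fin 3) → ℝ := fun S => min 6 (∑ i ∈ S, ![(3 : ℝ), 5, 3] i)
    let w : Finset (Fin 3) → ℝ := fun S => ∑ i ∈ S, ![(1 : ℝ), 2, 0] i
    orVal u w {0, 1} + orVal u w {1, 2} <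
      orVal u w {0, 1, 2} + orVal u w {1} := by
  intro u w
  have hu : ∀ S, u S = min 6 (∑ i ∈ S, ![(3 : ℝ), 5, 3] i) := fun _ => rfl
  have hw : ∀ S, w S = ∑ i ∈ S, ![(1 : ℝ), 2, 0] i := fun _ => rfl
  have univ3 : ({0,1,2} : Finset (Fin 3)) = Finset.univ := by decide
  have u_e : u ∅ = 0 := by rw [hu]; norm_num
  have u_0 : u {0} = 3 := by rw [hu]; norm_num
  have u_1 : u {1} = 5 := by rw [hu]; norm_num
  have u_2 : u {2} = 3 := by rw [hu]; norm_num [Matrix.cons_val_two]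
  have u_01 : u {0,1} = 6 := by rw [hu]; rw [Finset.sum_pair (by decide)]; norm_num
  have u_02 : u {0,2} = 6 := by rw [hu]; rw [Finset.sum_pair (by decide)]; norm_num [Matrix.cons_val_two]
  have u_12 : u {1,2} = 6 := by rw [hu]; rw [Finset.sum_pair (by decide)]; norm_num [Matrix.cons_val_two]
  have u_012 : u {0,1,2} = 6 := by
    rw [hu, univ3, Fin.sum_univ_three]; norm_num [Matrix.cons_val_two]
  have w_e : w ∅ = 0 := by rw [hw]; norm_num
  have w_0 : w {0} = 1 := by rw [hw]; norm_num
  have w_1 : w {1} = 2 := by rw [hw]; norm_num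
  have w_2 : w {2} = 0 := by rw [hw]; norm_num [Matrix.cons_val_two]
  have w_01 : w {0,1} = 3 := by rw [hw]; rw [Finset.sum_pair (by decide)]; norm_num
  have w_02 : w {0,2} = 1 := by rw [hw]; rw [Finset.sum_pair (by decide)]; norm_num [Matrix.cons_val_two]
  have w_12 : w {1,2} = 2 := by rw [hw]; rw [Finset.sum_pair (by decide)]; norm_num [Matrix.cons_val_two]
  have w_012 : w {0,1,2} = 3 := by
    rw [hw, univ3, Fin.sum_univ_three]; norm_num [Matrix.cons_val_two]
  have e1 : orVal u w {0, 1} = 6 := by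
    have h : ({0,1} : Finset (Fin 3)).powerset = {∅, {0}, {1}, {0,1}} := by decide
    rw [orVal, Finset.sup'_congr _ h (fun _ _ => rfl)]
    repeat rw [Finset.sup'_insert (H := by simp)]
    rw [Finset.sup'_singleton]
    rw [show ({0,1} : Finset (Fin 3)) \ ∅ = {0,1} by decide,
        show ({0,1} : Finset (Fin 3)) \ {0} = {1} by decide,
        show ({0,1} : Finset (Fin 3)) \ {1} = {0} by decide,
        show ({0,1} : Finset (Fin 3)) \ {0,1} = ∅ by decide,
        u_e, u_0, u_1, u_01, w_e, w_0, w_1, w_01]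
    norm_num
  have e2 : orVal u w {1, 2} = 6 := by
    have h : ({1,2} : Finset (Fin 3)).powerset = {∅, {1}, {2}, {1,2}} := by decide
    rw [orVal, Finset.sup'_congr _ h (fun _ _ => rfl)]
    repeat rw [Finset.sup'_insert (H := by simp)]
    rw [Finset.sup'_singleton]
    rw [show ({1,2} : Finset (Fin 3)) \ ∅ = {1,2} by decide,
        show ({1,2} : Finset (Fin 3)) \ {1} = {2} by decide,
        show ({1,2} : Finset (Fin 3)) \ {2} = {1} by decide,
        show ({1,2} : Finset (Fin 3)) \ {1,2} = ∅ by decide,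
        u_e, u_1, u_2, u_12, w_e, w_1, w_2, w_12]
    norm_num
  have e3 : orVal u w {0, 1, 2} = 8 := by
    have h : ({0,1,2} : Finset (Fin 3)).powerset =
        {∅, {0}, {1}, {2}, {0,1}, {0,2}, {1,2}, {0,1,2}} := by decide
    rw [orVal, Finset.sup'_congr _ h (fun _ _ => rfl)]
    repeat rw [Finset.sup'_insert (H := by simp)]
    rw [Finset.sup'_singleton]
    rw [show ({0,1,2} : Finset (Fin 3)) \ ∅ = {0,1,2} by decide,
        show ({0,1,2} : Finset (Fin 3)) \ {0} = {1,2} by decide,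
        show ({0,1,2} : Finset (Fin 3)) \ {1} = {0,2} by decide,
        show ({0,1,2} : Finset (Fin 3)) \ {2} = {0,1} by decide,
        show ({0,1,2} : Finset (Fin 3)) \ {0,1} = {2} by decide,
        show ({0,1,2} : Finset (Fin 3)) \ {0,2} = {1} by decide,
        show ({0,1,2} : Finset (Fin 3)) \ {1,2} = {0} by decide,
        show ({0,1,2} : Finset (Fin 3)) \ {0,1,2} = ∅ by decide,
        u_e, u_0, u_1, u_2, u_01, u_02, u_12, u_012,
        w_e, w_0, w_1, w_2, w_01, w_02, w_12, w_012]
    norm_num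
  have e4 : orVal u w {1} = 5 := by
    have h : ({1} : Finset (Fin 3)).powerset = {∅, {1}} := by decide
    rw [orVal, Finset.sup'_congr _ h (fun _ _ => rfl)]
    repeat rw [Finset.sup'_insert (H := by simp)]
    rw [Finset.sup'_singleton]
    rw [show ({1} : Finset (Fin 3)) \ ∅ = {1} by decide,
        show ({1} : Finset (Fin 3)) \ {1} = ∅ by decide,
        u_e, u_1, w_e, w_1]
    norm_num
  rw [e1, e2, e3, e4]; norm_num
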